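/- arXiv:0803.1365 — 8 statements merged into one kernel-verified Lean document; each statement's English description precedes it below -/
import Mathlib

section
/- Let μ be a nonzero finite positive Borel measure on (0,∞). Let φ, ψ, θ be index functions such that θ, φ·θ and ψ·θ are μ-integrable and ∫θ dμ > 0. Let Φ, Ψ : (0,∞) → (0,∞) be concave functions, and suppose that 1 ≤ Φ(φ(λ))·Ψ(ψ(λ)) for μ-almost every λ ∈ (0,∞). Then 1 ≤ Φ( (∫φθ dμ)/(∫θ dμ) ) · Ψ( (∫ψθ dμ)/(∫θ dμ) ). -/
open MeasureTheory Set

/-- Supporting line for a concave function on `Ioi 0`. -/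
lemma vhs_tangent_line {Φ : ℝ → ℝ} (hΦ : ConcaveOn ℝ (Ioi 0) Φ) {m : ℝ} (hm : 0 < m) :
    ∃ a : ℝ, ∀ x ∈ Ioi (0:ℝ), Φ x ≤ Φ m + a * (x - m) := by
  set A : Set ℝ := (fun x => (Φ m - Φ x) / (m - x)) '' Ioo 0 m with hA
  have hne : A.Nonempty := ⟨_, ⟨m / 2, ⟨by linarith, by linarith⟩, rfl⟩⟩
  have hlb : ∀ z, m < z → ∀ q ∈ A, (Φ z - Φ m) / (z - m) ≤ q := by
    rintro z hz q ⟨x, hx, rfl⟩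
    exact hΦ.slope_anti_adjacent hx.1 (by simp only [mem_Ioi]; linarith) hx.2 hz
  have hbdd : BddBelow A := ⟨(Φ (2 * m) - Φ m) / (2 * m - m),
    fun q hq => hlb (2 * m) (by linarith) q hq⟩
  refine ⟨sInf A, fun x hx => ?_⟩
  rcases lt_trichotomy x m with h | h | h
  · have h1 : sInf A ≤ (Φ m - Φ x) / (m - x) := csInf_le hbdd ⟨x, ⟨hx, h⟩, rfl⟩
    rw [le_div_iff₀ (by linarith : (0:ℝ) < m - x)] at h1
    nlinarith
  · subst h; simp
  · have h1 : (Φ x - Φ m) / (x - m) ≤ sInf A := le_csInf hne (hlb x h)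
    rw [div_le_iff₀ (by linarith : (0:ℝ) < x - m)] at h1
    nlinarith

lemma vhs_ae_pos {μ : Measure ℝ} (hsupp : μ (Iic 0) = 0) : ∀ᵐ x ∂μ, 0 < x := by
  rw [ae_iff]
  convert hsupp using 2
  ext x; simp [not_lt]

lemma vhs_aesm {μ : Measure ℝ} (hsupp : μ (Iic 0) = 0) {Φ φ : ℝ → ℝ}
    (hΦc : ContinuousOn Φ (Ioi 0)) (hφm : Measurable φ)
    (hφp : ∀ x ∈ Ioi (0:ℝ), 0 < φ x) :
    AEStronglyMeasurable (fun x => Φ (φ x)) μ := by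
  set φ'' : ℝ → ℝ := fun x => if 0 < x then φ x else 1 with hφ''
  have hpos : ∀ x, φ'' x ∈ Ioi (0:ℝ) := by
    intro x
    by_cases hx : 0 < x
    · simpa [φ'', if_pos hx] using hφp x hx
    · simp [φ'', if_neg hx]
  have hmeas : Measurable φ'' := Measurable.ite measurableSet_Ioi hφm measurable_const
  have h1 : Measurable fun x => Φ (φ'' x) := by
    have hc : Continuous ((Ioi (0:ℝ)).restrict Φ) := hΦc.restrict
    have hg : Measurable (fun x => (⟨φ'' x, hpos x⟩ : Ioi (0:ℝ))) := hmeas.subtype_mk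
    exact hc.measurable.comp hg
  refine h1.aestronglyMeasurable.congr ?_
  filter_upwards [vhs_ae_pos hsupp] with x hx
  simp [φ'', if_pos hx]

lemma vhs_integrable {μ : Measure ℝ} [IsFiniteMeasure μ] (hsupp : μ (Iic 0) = 0)
    {Φ φ θ : ℝ → ℝ}
    (hΦc : ConcaveOn ℝ (Ioi 0) Φ) (hΦp : ∀ x ∈ Ioi (0:ℝ), 0 < Φ x)
    (hφm : Measurable φ) (hφp : ∀ x ∈ Ioi (0:ℝ), 0 < φ x)
    (hθp : ∀ x ∈ Ioi (0:ℝ), 0 < θ x)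
    (hθi : Integrable θ μ) (hφθi : Integrable (fun x => φ x * θ x) μ) :
    Integrable (fun x => Φ (φ x) * θ x) μ := by
  obtain ⟨a, ha⟩ := vhs_tangent_line hΦc one_pos
  have haesm : AEStronglyMeasurable (fun x => Φ (φ x) * θ x) μ :=
    (vhs_aesm hsupp (hΦc.continuousOn isOpen_Ioi) hφm hφp).mul hθi.aestronglyMeasurable
  refine Integrable.mono' ((hθi.const_mul (Φ 1 - a)).add (hφθi.const_mul a)) haesm ?_
  filter_upwards [vhs_ae_pos hsupp] with x hx
  have hφx := hφp x hx
  have hθx := hθp x hx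
  have hΦx := hΦp (φ x) hφx
  have hb := ha (φ x) hφx
  rw [Real.norm_eq_abs, abs_of_nonneg (by positivity)]
  simp only [Pi.add_apply]
  nlinarith [mul_le_mul_of_nonneg_right hb hθx.le]

lemma vhs_jensen {μ : Measure ℝ} [IsFiniteMeasure μ] (hsupp : μ (Iic 0) = 0)
    {Φ φ θ : ℝ → ℝ}
    (hΦc : ConcaveOn ℝ (Ioi 0) Φ) (hΦp : ∀ x ∈ Ioi (0:ℝ), 0 < Φ x)
    (hφm : Measurable φ) (hφp : ∀ x ∈ Ioi (0:ℝ), 0 < φ x)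
    (hθp : ∀ x ∈ Ioi (0:ℝ), 0 < θ x)
    (hθi : Integrable θ μ) (hφθi : Integrable (fun x => φ x * θ x) μ)
    (hθpos : 0 < ∫ x, θ x ∂μ) (hφθpos : 0 < ∫ x, φ x * θ x ∂μ) :
    ∫ x, Φ (φ x) * θ x ∂μ ≤
      Φ ((∫ x, φ x * θ x ∂μ) / ∫ x, θ x ∂μ) * ∫ x, θ x ∂μ := by
  set m : ℝ := (∫ x, φ x * θ x ∂μ) / ∫ x, θ x ∂μ with hm
  have hm0 : 0 < m := div_pos hφθpos hθpos
  obtain ⟨a, ha⟩ := vhs_tangent_line hΦc hm0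
  have key : ∫ x, Φ (φ x) * θ x ∂μ ≤ ∫ x, ((Φ m - a * m) * θ x + a * (φ x * θ x)) ∂μ := by
    refine integral_mono_ae (vhs_integrable hsupp hΦc hΦp hφm hφp hθp hθi hφθi)
      ((hθi.const_mul (Φ m - a * m)).add (hφθi.const_mul a)) ?_
    filter_upwards [vhs_ae_pos hsupp] with x hx
    have hθx := hθp x hx
    have hb := ha (φ x) (hφp x hx)
    nlinarith
  have heq : ∫ x, ((Φ m - a * m) * θ x + a * (φ x * θ x)) ∂μ
      = (Φ m - a * m) * ∫ x, θ x ∂μ + a * ∫ x, φ x * θ x ∂μ := by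
    rw [integral_add (hθi.const_mul _) (hφθi.const_mul _), integral_const_mul,
      integral_const_mul]
  have hmeq : m * ∫ x, θ x ∂μ = ∫ x, φ x * θ x ∂μ := by
    rw [hm, div_mul_cancel₀ _ hθpos.ne']
  rw [heq] at key
  have h2 : a * (m * ∫ x, θ x ∂μ) = a * ∫ x, φ x * θ x ∂μ := by rw [hmeq]
  nlinarith

/-- **Generalised Hölder inequality for variable Hilbert scales** (Theorem 1).
`μ` is a nonzero finite positive Borel measure on `(0,∞)` (modelled as a finite
measure on `ℝ` vanishing outside `Ioi 0`); `φ, ψ, θ` are index functions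
(measurable and positive on `(0,∞)`); `Φ, Ψ` are concave positive functions on
`(0,∞)` with `1 ≤ Φ(φ λ) * Ψ(ψ λ)` μ-a.e.  Then
`1 ≤ Φ((∫ φθ dμ)/(∫ θ dμ)) * Ψ((∫ ψθ dμ)/(∫ θ dμ))`. -/
theorem generalised_holder_inequality
    (μ : Measure ℝ) [IsFiniteMeasure μ] (hμ : μ ≠ 0) (hsupp : μ (Iic 0) = 0)
    (φ ψ θ : ℝ → ℝ)
    (hφm : Measurable φ) (hψm : Measurable ψ) (hθm : Measurable θ)
    (hφp : ∀ x ∈ Ioi (0:ℝ), 0 < φ x)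
    (hψp : ∀ x ∈ Ioi (0:ℝ), 0 < ψ x)
    (hθp : ∀ x ∈ Ioi (0:ℝ), 0 < θ x)
    (hθi : Integrable θ μ)
    (hφθi : Integrable (fun x => φ x * θ x) μ)
    (hψθi : Integrable (fun x => ψ x * θ x) μ)
    (hθpos : 0 < ∫ x, θ x ∂μ)
    (Φ Ψ : ℝ → ℝ)
    (hΦc : ConcaveOn ℝ (Ioi 0) Φ) (hΨc : ConcaveOn ℝ (Ioi 0) Ψ)
    (hΦp : ∀ x ∈ Ioi (0:ℝ), 0 < Φ x) (hΨp : ∀ x ∈ Ioi (0:ℝ), 0 < Ψ x)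
    (hae : ∀ᵐ l ∂μ, l ∈ Ioi (0:ℝ) → 1 ≤ Φ (φ l) * Ψ (ψ l)) :
    1 ≤ Φ ((∫ x, φ x * θ x ∂μ) / ∫ x, θ x ∂μ) *
        Ψ ((∫ x, ψ x * θ x ∂μ) / ∫ x, θ x ∂μ) := by
  have haep := vhs_ae_pos hsupp
  -- positivity of ∫ φθ and ∫ ψθ
  have hpos_int : ∀ (ρ : ℝ → ℝ), (∀ x ∈ Ioi (0:ℝ), 0 < ρ x) →
      Integrable (fun x => ρ x * θ x) μ → 0 < ∫ x, ρ x * θ x ∂μ := by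
    intro ρ hρp hρi
    have h0 : 0 ≤ᵐ[μ] fun x => ρ x * θ x := by
      filter_upwards [haep] with x hx
      exact (mul_pos (hρp x hx) (hθp x hx)).le
    rw [integral_pos_iff_support_of_nonneg_ae h0 hρi]
    have hmem : ∀ᵐ x ∂μ, x ∈ Function.support fun x => ρ x * θ x := by
      filter_upwards [haep] with x hx
      exact (mul_pos (hρp x hx) (hθp x hx)).ne'
    have hc : μ (Function.support fun x => ρ x * θ x)ᶜ = 0 := hmem
    refine pos_iff_ne_zero.mpr fun h' => hμ ?_
    have huniv : μ univ = 0 := by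
      have h2 := measure_union_le (μ := μ) (Function.support fun x => ρ x * θ x)
        (Function.support fun x => ρ x * θ x)ᶜ
      rw [union_compl_self, h', hc] at h2
      simpa using h2
    exact Measure.measure_univ_eq_zero.mp huniv
  have hφθpos : 0 < ∫ x, φ x * θ x ∂μ := hpos_int φ hφp hφθi
  have hψθpos : 0 < ∫ x, ψ x * θ x ∂μ := hpos_int ψ hψp hψθi
  -- integrability and nonnegativity of Φ(φ)θ, Ψ(ψ)θ
  have hΦi : Integrable (fun x => Φ (φ x) * θ x) μ :=
    vhs_integrable hsupp hΦc hΦp hφm hφp hθp hθi hφθi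
  have hΨi : Integrable (fun x => Ψ (ψ x) * θ x) μ :=
    vhs_integrable hsupp hΨc hΨp hψm hψp hθp hθi hψθi
  set IΦ : ℝ := ∫ x, Φ (φ x) * θ x ∂μ with hIΦdef
  set IΨ : ℝ := ∫ x, Ψ (ψ x) * θ x ∂μ with hIΨdef
  have hIΦ0 : 0 ≤ IΦ := integral_nonneg_of_ae <| by
    filter_upwards [haep] with x hx
    exact (mul_pos (hΦp _ (hφp x hx)) (hθp x hx)).le
  have hIΨ0 : 0 ≤ IΨ := integral_nonneg_of_ae <| by
    filter_upwards [haep] with x hx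
    exact (mul_pos (hΨp _ (hψp x hx)) (hθp x hx)).le
  -- Cauchy–Schwarz
  set f : ℝ → ℝ := fun x => Real.sqrt (Φ (φ x) * θ x) with hfdef
  set g : ℝ → ℝ := fun x => Real.sqrt (Ψ (ψ x) * θ x) with hgdef
  have hfsm : AEStronglyMeasurable f μ :=
    Real.continuous_sqrt.comp_aestronglyMeasurable hΦi.aestronglyMeasurable
  have hgsm : AEStronglyMeasurable g μ :=
    Real.continuous_sqrt.comp_aestronglyMeasurable hΨi.aestronglyMeasurable
  have hfsq : (fun x => f x ^ 2) =ᵐ[μ] fun x => Φ (φ x) * θ x := by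
    filter_upwards [haep] with x hx
    exact Real.sq_sqrt (mul_pos (hΦp _ (hφp x hx)) (hθp x hx)).le
  have hgsq : (fun x => g x ^ 2) =ᵐ[μ] fun x => Ψ (ψ x) * θ x := by
    filter_upwards [haep] with x hx
    exact Real.sq_sqrt (mul_pos (hΨp _ (hψp x hx)) (hθp x hx)).le
  have hf2 : MemLp f 2 μ :=
    (memLp_two_iff_integrable_sq hfsm).mpr (hΦi.congr hfsq.symm)
  have hg2 : MemLp g 2 μ :=
    (memLp_two_iff_integrable_sq hgsm).mpr (hΨi.congr hgsq.symm)
  have hpq : Real.HolderConjugate 2 2 := Real.HolderConjugate.two_two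
  have h2 : (ENNReal.ofReal (2:ℝ)) = 2 := by norm_num
  have hCS := integral_mul_le_Lp_mul_Lq_of_nonneg hpq
    (Filter.Eventually.of_forall fun x => Real.sqrt_nonneg _)
    (Filter.Eventually.of_forall fun x => Real.sqrt_nonneg _)
    (h2 ▸ hf2) (h2 ▸ hg2)
  have hf2int : ∫ x, f x ^ (2:ℝ) ∂μ = IΦ := by
    rw [hIΦdef]
    refine integral_congr_ae ?_
    filter_upwards [hfsq] with x hx
    rw [← hx]
    norm_num [Real.rpow_natCast (f x) 2]
  have hg2int : ∫ x, g x ^ (2:ℝ) ∂μ = IΨ := by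
    rw [hIΨdef]
    refine integral_congr_ae ?_
    filter_upwards [hgsq] with x hx
    rw [← hx]
    norm_num [Real.rpow_natCast (g x) 2]
  rw [hf2int, hg2int] at hCS
  -- ∫ θ ≤ ∫ f g
  have hfgi : Integrable (fun x => f x * g x) μ := by
    refine Integrable.mono' (((hΦi.congr hfsq.symm).add (hΨi.congr hgsq.symm)).const_mul
      (1/2 : ℝ)) (hfsm.mul hgsm) ?_
    refine Filter.Eventually.of_forall fun x => ?_
    have h1 := Real.sqrt_nonneg (Φ (φ x) * θ x)
    have h2 := Real.sqrt_nonneg (Ψ (ψ x) * θ x)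
    rw [Real.norm_eq_abs, abs_of_nonneg (mul_nonneg h1 h2)]
    simp only [Pi.add_apply]
    nlinarith [sq_nonneg (f x - g x)]
  have hθle : ∫ x, θ x ∂μ ≤ ∫ x, f x * g x ∂μ := by
    refine integral_mono_ae hθi hfgi ?_
    filter_upwards [haep, hae] with x hx h1x
    have h1 := h1x hx
    have hθx := hθp x hx
    have hΦx := hΦp _ (hφp x hx)
    have hΨx := hΨp _ (hψp x hx)
    have hsq : θ x ^ 2 ≤ Φ (φ x) * θ x * (Ψ (ψ x) * θ x) := by nlinarith
    calc θ x = Real.sqrt (θ x ^ 2) := (Real.sqrt_sq hθx.le).symm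
      _ ≤ Real.sqrt (Φ (φ x) * θ x * (Ψ (ψ x) * θ x)) := Real.sqrt_le_sqrt hsq
      _ = f x * g x := Real.sqrt_mul (mul_pos hΦx hθx).le _
  have hkey : (∫ x, θ x ∂μ) ≤ Real.sqrt IΦ * Real.sqrt IΨ := by
    calc (∫ x, θ x ∂μ) ≤ ∫ x, f x * g x ∂μ := hθle
      _ ≤ IΦ ^ ((1:ℝ)/2) * IΨ ^ ((1:ℝ)/2) := hCS
      _ = Real.sqrt IΦ * Real.sqrt IΨ := by
          rw [← Real.sqrt_eq_rpow, ← Real.sqrt_eq_rpow]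
  have hsqkey : (∫ x, θ x ∂μ) ^ 2 ≤ IΦ * IΨ := by
    nlinarith [Real.sq_sqrt hIΦ0, Real.sq_sqrt hIΨ0, Real.sqrt_nonneg IΦ,
      Real.sqrt_nonneg IΨ]
  -- Jensen
  have hJΦ : IΦ ≤ Φ ((∫ x, φ x * θ x ∂μ) / ∫ x, θ x ∂μ) * ∫ x, θ x ∂μ :=
    vhs_jensen hsupp hΦc hΦp hφm hφp hθp hθi hφθi hθpos hφθpos
  have hJΨ : IΨ ≤ Ψ ((∫ x, ψ x * θ x ∂μ) / ∫ x, θ x ∂μ) * ∫ x, θ x ∂μ :=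
    vhs_jensen hsupp hΨc hΨp hψm hψp hθp hθi hψθi hθpos hψθpos
  have hΦm : 0 < Φ ((∫ x, φ x * θ x ∂μ) / ∫ x, θ x ∂μ) :=
    hΦp _ (div_pos hφθpos hθpos)
  have hΨm : 0 < Ψ ((∫ x, ψ x * θ x ∂μ) / ∫ x, θ x ∂μ) :=
    hΨp _ (div_pos hψθpos hθpos)
  have hchain : (∫ x, θ x ∂μ) ^ 2 ≤
      (Φ ((∫ x, φ x * θ x ∂μ) / ∫ x, θ x ∂μ) * ∫ x, θ x ∂μ) *
      (Ψ ((∫ x, ψ x * θ x ∂μ) / ∫ x, θ x ∂μ) * ∫ x, θ x ∂μ) :=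
    hsqkey.trans (mul_le_mul hJΦ hJΨ hIΨ0 (mul_pos hΦm hθpos).le)
  nlinarith [pow_pos hθpos 2, hchain, mul_pos hΦm hΨm]
end

section
/- Let μ be a nonzero finite positive Borel measure on (0,∞). Let φ, ψ, θ be index functions such that θ, φ·θ and ψ·θ are μ-integrable and ∫θ dμ > 0. Suppose ψ is a continuous strictly increasing bijection of (0,∞) onto (0,∞) and that the composition φ∘ψ⁻¹ is concave. Then ∫φθ dμ ≤ (∫θ dμ) · (φ∘ψ⁻¹)( (∫ψθ dμ)/(∫θ dμ) ). -/
open MeasureTheory Set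

/-- A concave function on `(0,∞)` has a supporting line at every point. -/
lemma concave_support_line {g : ℝ → ℝ} (hg : ConcaveOn ℝ (Ioi (0:ℝ)) g) {m : ℝ} (hm : 0 < m) :
    ∃ c : ℝ, ∀ y ∈ Ioi (0:ℝ), g y ≤ g m + c * (y - m) := by
  set S : Set ℝ := (fun y => (g y - g m) / (y - m)) '' Ioi m with hS
  have hm2 : (0:ℝ) < m / 2 := by linarith
  have hm2m : m / 2 < m := by linarith
  have hne : S.Nonempty := ⟨_, ⟨m + 1, by simp [hm.trans (lt_add_one m)], rfl⟩⟩
  have hbdd : BddAbove S := by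
    refine ⟨(g m - g (m / 2)) / (m - m / 2), ?_⟩
    rintro r ⟨y, hy, rfl⟩
    exact hg.slope_anti_adjacent hm2 (hm.trans hy) hm2m hy
  refine ⟨sSup S, fun y hy => ?_⟩
  rcases lt_trichotomy y m with h | h | h
  · -- y < m : sSup S ≤ slope from y to m
    have hub : (g m - g y) / (m - y) ∈ upperBounds S := by
      rintro r ⟨z, hz, rfl⟩
      exact hg.slope_anti_adjacent hy (hm.trans hz) h hz
    have hle : sSup S ≤ (g m - g y) / (m - y) := csSup_le hne hub
    have hmy : (0:ℝ) < m - y := by linarith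
    have := (le_div_iff₀ hmy).mp hle
    nlinarith
  · simp [h]
  · -- y > m
    have hmem : (g y - g m) / (y - m) ∈ S := ⟨y, h, rfl⟩
    have hle : (g y - g m) / (y - m) ≤ sSup S := le_csSup hbdd hmem
    have hym : (0:ℝ) < y - m := by linarith
    have := (div_le_iff₀ hym).mp hle
    nlinarith

/-- **Interpolation inequality for variable Hilbert scales, first part** (Corollary 2).
If `ψ` is a continuous strictly increasing bijection of `(0,∞)` onto itself with
inverse `ψinv`, and `φ ∘ ψ⁻¹` is concave, then
`∫ φθ dμ ≤ (∫ θ dμ) * (φ∘ψ⁻¹)((∫ ψθ dμ)/(∫ θ dμ))`. -/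
theorem vhs_interpolation_inequality
    (μ : Measure ℝ) [IsFiniteMeasure μ] (hμ : μ ≠ 0) (hsupp : μ (Iic 0) = 0)
    (φ ψ θ : ℝ → ℝ)
    (hφm : Measurable φ) (hψm : Measurable ψ) (hθm : Measurable θ)
    (hφp : ∀ x ∈ Ioi (0:ℝ), 0 < φ x)
    (hψp : ∀ x ∈ Ioi (0:ℝ), 0 < ψ x)
    (hθp : ∀ x ∈ Ioi (0:ℝ), 0 < θ x)
    (hθi : Integrable θ μ)
    (hφθi : Integrable (fun x => φ x * θ x) μ)
    (hψθi : Integrable (fun x => ψ x * θ x) μ)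
    (hθpos : 0 < ∫ x, θ x ∂μ)
    (hψcont : ContinuousOn ψ (Ioi 0)) (hψmono : StrictMonoOn ψ (Ioi 0))
    (hψsurj : ψ '' Ioi 0 = Ioi 0)
    (ψinv : ℝ → ℝ) (hψinv : InvOn ψinv ψ (Ioi 0) (Ioi 0))
    (hconc : ConcaveOn ℝ (Ioi 0) (fun y => φ (ψinv y))) :
    ∫ x, φ x * θ x ∂μ ≤
      (∫ x, θ x ∂μ) * φ (ψinv ((∫ x, ψ x * θ x ∂μ) / ∫ x, θ x ∂μ)) := by
  set g : ℝ → ℝ := fun y => φ (ψinv y) with hg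
  set I₀ : ℝ := ∫ x, θ x ∂μ with hI₀
  set I₁ : ℝ := ∫ x, ψ x * θ x ∂μ with hI₁
  -- a.e. every point is in `Ioi 0`
  have hae : ∀ᵐ x ∂μ, x ∈ Ioi (0:ℝ) := by
    rw [ae_iff]
    convert hsupp using 2
    ext x; simp [not_lt]
  -- `I₁ > 0`
  have hI₁pos : 0 < I₁ := by
    have hnn : 0 ≤ᵐ[μ] fun x => ψ x * θ x :=
      hae.mono fun x hx => le_of_lt (mul_pos (hψp x hx) (hθp x hx))
    rw [hI₁, integral_pos_iff_support_of_nonneg_ae hnn hψθi]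
    have hsub : Ioi (0:ℝ) ⊆ Function.support fun x => ψ x * θ x := fun x hx =>
      ne_of_gt (mul_pos (hψp x hx) (hθp x hx))
    have hIoi : 0 < μ (Ioi 0) := by
      by_contra h
      push_neg at h
      have h0 : μ (Ioi 0) = 0 := le_antisymm h zero_le
      apply hμ
      have : μ univ = 0 := by
        have : μ univ ≤ μ (Iic 0) + μ (Ioi 0) := by
          rw [← Iic_union_Ioi (a := (0:ℝ))]
          exact measure_union_le _ _
        simpa [h0, hsupp] using this
      exact Measure.measure_univ_eq_zero.mp this
    exact lt_of_lt_of_le hIoi (measure_mono hsub)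
  set m : ℝ := I₁ / I₀ with hm
  have hmpos : 0 < m := div_pos hI₁pos hθpos
  obtain ⟨c, hc⟩ := concave_support_line hconc hmpos
  -- pointwise a.e. bound
  have hpt : ∀ᵐ x ∂μ, φ x * θ x ≤ (g m - c * m) * θ x + c * (ψ x * θ x) := by
    refine hae.mono fun x hx => ?_
    have hψx : ψ x ∈ Ioi (0:ℝ) := hψp x hx
    have h1 := hc (ψ x) hψx
    have this : φ x ≤ g m + c * (ψ x - m) := by
      simpa [g, hψinv.1 hx] using h1
    have hθx : 0 ≤ θ x := le_of_lt (hθp x hx)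
    nlinarith
  have hint : Integrable (fun x => (g m - c * m) * θ x + c * (ψ x * θ x)) μ :=
    (hθi.const_mul _).add (hψθi.const_mul _)
  have hle := integral_mono_ae hφθi hint hpt
  rw [integral_add (hθi.const_mul _) (hψθi.const_mul _), integral_const_mul,
    integral_const_mul] at hle
  have hmI : m * I₀ = I₁ := div_mul_cancel₀ _ (ne_of_gt hθpos)
  calc ∫ x, φ x * θ x ∂μ ≤ (g m - c * m) * I₀ + c * I₁ := hle
    _ = I₀ * g m := by linear_combination (-c) * hmI
end

section
/- Let α : (0,∞) → (0,∞) be a locally integrable function satisfying the scaling relation α(σλ) ≤ α(λ)/σ for all σ ∈ (0,1] and all λ > 0, let c > 0, and define a : [0,∞) → [1,∞) by a(λ) = 1 + c·∫₀^λ exp(∫₁^t α(s) ds) dt, assuming t ↦ exp(∫₁^t α(s) ds) is integrable on every interval [0,λ]. Then a is a continuous strictly increasing function with a(0) = 1, and for every nonzero finite positive Borel measure μ on (0,∞) with λ ↦ a(λ) μ-integrable and every σ ∈ [0,1]: ∫a(σλ) dμ(λ) ≤ μ((0,∞)) · a( σ · a⁻¹( (∫a(λ) dμ(λ))/μ((0,∞))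 ) ), where a⁻¹ denotes the inverse function of a. -/
open MeasureTheory Set intervalIntegral

/-- **Dilational interpolation inequality** (Theorem 2).
Let `α : (0,∞) → (0,∞)` be locally integrable with `α(σλ) ≤ α(λ)/σ` for
`σ ∈ (0,1]`, `c > 0`, and let `a(λ) = 1 + c ∫₀^λ exp(∫₁^t α(s) ds) dt` (the
integrand being integrable on every `[0,λ]`).  Then `a` is continuous and
strictly increasing on `[0,∞)` with `a 0 = 1`, and for every nonzero finite
positive Borel measure `μ` on `(0,∞)` with `a` μ-integrable, every
(two-sided) inverse `ainv` of `a` and every `σ ∈ [0,1]`,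
`∫ a(σλ) dμ(λ) ≤ μ((0,∞)) * a(σ * a⁻¹((∫ a dμ)/μ((0,∞))))`. -/
theorem dilational_interpolation_inequality
    (α : ℝ → ℝ)
    (hα_loc : LocallyIntegrableOn α (Ioi 0))
    (hα_pos : ∀ x ∈ Ioi (0:ℝ), 0 < α x)
    (hα_scale : ∀ σ ∈ Ioc (0:ℝ) 1, ∀ l > (0:ℝ), α (σ * l) ≤ α l / σ)
    (c : ℝ) (hc : 0 < c)
    (hint : ∀ l : ℝ, 0 ≤ l →
      IntervalIntegrable (fun t => Real.exp (∫ s in (1:ℝ)..t, α s)) volume 0 l)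
    (a : ℝ → ℝ)
    (ha : ∀ l : ℝ, 0 ≤ l →
      a l = 1 + c * ∫ t in (0:ℝ)..l, Real.exp (∫ s in (1:ℝ)..t, α s)) :
    ContinuousOn a (Ici 0) ∧ StrictMonoOn a (Ici 0) ∧ a 0 = 1 ∧
      ∀ μ : Measure ℝ, IsFiniteMeasure μ → μ ≠ 0 → μ (Iic 0) = 0 →
        Integrable a μ →
        ∀ ainv : ℝ → ℝ, InvOn ainv a (Ici 0) (a '' Ici 0) →
          ∀ σ ∈ Icc (0:ℝ) 1,
            ∫ l, a (σ * l) ∂μ ≤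
              (μ (Ioi 0)).toReal *
                a (σ * ainv ((∫ l, a l ∂μ) / (μ (Ioi 0)).toReal)) := by
  set E : ℝ → ℝ := fun t => ∫ s in (1:ℝ)..t, α s with hE
  set g : ℝ → ℝ := fun t => Real.exp (E t) with hgdef
  have hgpos : ∀ t, 0 < g t := fun t => Real.exp_pos _
  -- integrability of α on compact intervals inside (0,∞)
  have hαint : ∀ x y : ℝ, 0 < x → 0 < y → IntervalIntegrable α volume x y := by
    intro x y hx hy
    refine (hα_loc.integrableOn_compact_subset ?_ isCompact_uIcc).intervalIntegrable
    intro t ht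
    exact lt_of_lt_of_le (lt_min hx hy) ht.1
  -- integrability of g on intervals of [0,∞)
  have hgint : ∀ x y : ℝ, 0 ≤ x → 0 ≤ y → IntervalIntegrable g volume x y := by
    intro x y hx hy
    refine (hint (max x y) (le_max_of_le_left hx)).mono_set ?_
    rw [uIcc_of_le (le_max_of_le_left hx : (0:ℝ) ≤ max x y)]
    exact uIcc_subset_Icc ⟨hx, le_max_left x y⟩ ⟨hy, le_max_right x y⟩
  -- difference formula for E
  have hEdiff : ∀ x y : ℝ, 0 < x → 0 < y → E y - E x = ∫ s in x..y, α s := by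
    intro x y hx hy
    have h := integral_add_adjacent_intervals (hαint 1 x one_pos hx) (hαint x y hx hy)
    simp only [hE]
    linarith [h]
  -- difference formula for a
  have hadiff : ∀ x y : ℝ, 0 ≤ x → 0 ≤ y → a y - a x = c * ∫ t in x..y, g t := by
    intro x y hx hy
    have h := integral_add_adjacent_intervals (hint x hx) (hgint x y hx hy)
    rw [ha x hx, ha y hy]
    have : (∫ t in (0:ℝ)..y, g t) - ∫ t in (0:ℝ)..x, g t = ∫ t in x..y, g t := by
      simp only [hgdef, hE] at h ⊢
      linarith [h]
    ring_nf
    nlinarith [this]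
  -- strict monotonicity
  have hmono : StrictMonoOn a (Ici 0) := by
    intro x hx y hy hxy
    have hpos : 0 < ∫ t in x..y, g t :=
      intervalIntegral_pos_of_pos_on (hgint x y hx hy) (fun t _ => hgpos t) hxy
    nlinarith [hadiff x y hx hy]
  have hmono' : MonotoneOn a (Ici 0) := hmono.monotoneOn
  have ha0 : a 0 = 1 := by rw [ha 0 le_rfl]; simp
  -- continuity
  have hcont : ContinuousOn a (Ici 0) := by
    intro x hx
    have hx0 : (0:ℝ) ≤ x := hx
    have hx1 : (0:ℝ) ≤ x + 1 := by linarith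
    have hmem : (0:ℝ) ∈ uIcc (0:ℝ) (x + 1) := left_mem_uIcc
    have h1 : ContinuousOn (fun b => ∫ t in (0:ℝ)..b, g t) (uIcc 0 (x + 1)) :=
      continuousOn_primitive_interval' (hint (x + 1) hx1) hmem
    have h2 : ContinuousOn (fun b => 1 + c * ∫ t in (0:ℝ)..b, g t) (uIcc 0 (x + 1)) :=
      (continuousOn_const.add (continuousOn_const.mul h1))
    have huIcc : uIcc (0:ℝ) (x + 1) = Icc 0 (x + 1) := uIcc_of_le hx1
    have hxmem : x ∈ Icc (0:ℝ) (x + 1) := ⟨hx0, by linarith⟩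
    have h3 : ContinuousWithinAt a (Icc 0 (x + 1)) x := by
      refine (h2 x (by rw [huIcc]; exact hxmem)).congr ?_ ?_ |>.mono (by rw [huIcc])
      · intro t ht
        rw [huIcc] at ht
        exact (ha t ht.1)
      · exact (ha x hx0)
    have hnhds : Icc (0:ℝ) (x + 1) ∈ nhdsWithin x (Ici 0) := by
      have : Ici (0:ℝ) ∩ Iio (x + 1) ∈ nhdsWithin x (Ici 0) :=
        Filter.inter_mem self_mem_nhdsWithin
          (mem_nhdsWithin_of_mem_nhds (Iio_mem_nhds (lt_add_one x)))
      exact Filter.mem_of_superset this (fun t ht => ⟨ht.1, le_of_lt ht.2⟩)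
    exact h3.mono_of_mem_nhdsWithin hnhds
  have ha_ge_one : ∀ l : ℝ, 0 ≤ l → 1 ≤ a l := by
    intro l hl
    rcases eq_or_lt_of_le hl with h | h
    · rw [← h, ha0]
    · rw [← ha0]; exact le_of_lt (hmono (Set.mem_Ici.mpr (le_refl (0:ℝ))) hl h)
  refine ⟨hcont, hmono, ha0, ?_⟩
  -- key pointwise tangent-line inequality
  have key : ∀ σ : ℝ, σ ∈ Icc (0:ℝ) 1 → ∀ w : ℝ, 0 ≤ w → ∀ l : ℝ, 0 < l →
      a (σ * l) ≤ a (σ * w) + σ * Real.exp (E (σ * w) - E w) * (a l - a w) := by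
    rintro σ ⟨hσ0, hσ1⟩ w hw l hl
    rcases eq_or_lt_of_le hσ0 with hσ | hσ
    · rw [← hσ]; simp
    have hσne : σ ≠ 0 := ne_of_gt hσ
    -- monotonicity of s ↦ E(σs) - E(s)
    have hhmono : ∀ s₁ s₂ : ℝ, 0 < s₁ → s₁ ≤ s₂ →
        E (σ * s₂) - E s₂ ≤ E (σ * s₁) - E s₁ := by
      intro s₁ s₂ h1 h12
      have h2 : 0 < s₂ := lt_of_lt_of_le h1 h12
      have hσs1 : 0 < σ * s₁ := mul_pos hσ h1
      have hσs2 : 0 < σ * s₂ := mul_pos hσ h2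
      have e1 : E s₂ - E s₁ = ∫ u in s₁..s₂, α u := hEdiff s₁ s₂ h1 h2
      have e2 : E (σ * s₂) - E (σ * s₁) = ∫ u in σ*s₁..σ*s₂, α u := hEdiff _ _ hσs1 hσs2
      have e3 : (∫ u in σ*s₁..σ*s₂, α u) = σ * ∫ u in s₁..s₂, α (σ * u) := by
        rw [← smul_integral_comp_mul_left]
        simp [smul_eq_mul]
      have hα2 : IntervalIntegrable (fun u => α (σ * u)) volume s₁ s₂ := by
        have h := (hαint (σ*s₁) (σ*s₂) hσs1 hσs2).comp_mul_left (c := σ)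
        rwa [mul_div_cancel_left₀ _ hσne, mul_div_cancel_left₀ _ hσne] at h
      have hcmp : (∫ u in s₁..s₂, σ * α (σ * u)) ≤ ∫ u in s₁..s₂, α u := by
        apply integral_mono_on h12 (hα2.const_mul σ) (hαint s₁ s₂ h1 h2)
        intro u hu
        have hu0 : 0 < u := lt_of_lt_of_le h1 hu.1
        have h := hα_scale σ ⟨hσ, hσ1⟩ u hu0
        rw [le_div_iff₀ hσ] at h
        nlinarith [h]
      rw [intervalIntegral.integral_const_mul] at hcmp
      linarith [e1, e2, e3, hcmp]
    -- pointwise comparison of integrands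
    have hDle : ∀ s : ℝ, 0 ≤ s → w ≤ s →
        g (σ * s) ≤ Real.exp (E (σ*w) - E w) * g s := by
      intro s hs hws
      rcases eq_or_lt_of_le hs with hs' | hs'
      · have hw0 : w = 0 := le_antisymm (hs' ▸ hws) hw
        rw [← hs', hw0]
        simp [hgdef]
      rcases eq_or_lt_of_le hw with hw' | hw'
      · have hEs : E (σ * s) - E s ≤ 0 := by
          have hσs : 0 < σ * s := mul_pos hσ hs'
          have hle : σ * s ≤ s := by nlinarith
          have := hEdiff (σ * s) s hσs hs'
          have hnn : 0 ≤ ∫ u in σ*s..s, α u := by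
            apply intervalIntegral.integral_nonneg hle
            intro u hu
            exact (hα_pos u (lt_of_lt_of_le hσs hu.1)).le
          linarith
        rw [← hw']
        simp only [hgdef, mul_zero, sub_self]
        rw [← Real.exp_add]
        apply Real.exp_le_exp.mpr
        linarith
      · have h := hhmono w s hw' hws
        simp only [hgdef]
        rw [← Real.exp_add]
        apply Real.exp_le_exp.mpr
        linarith
    have hDge : ∀ s : ℝ, 0 < s → s ≤ w →
        Real.exp (E (σ*w) - E w) * g s ≤ g (σ * s) := by
      intro s hs hsw
      have h := hhmono s w hs hsw
      simp only [hgdef]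
      rw [← Real.exp_add]
      apply Real.exp_le_exp.mpr
      linarith
    have hσw : 0 ≤ σ * w := mul_nonneg hσ0 hw
    have hσl : 0 ≤ σ * l := mul_nonneg hσ0 hl.le
    have hgσint : ∀ x y : ℝ, 0 ≤ x → 0 ≤ y →
        IntervalIntegrable (fun s => g (σ*s)) volume x y := by
      intro x y hx hy
      have h := (hgint (σ*x) (σ*y) (mul_nonneg hσ0 hx) (mul_nonneg hσ0 hy)).comp_mul_left (c := σ)
      rwa [mul_div_cancel_left₀ _ hσne, mul_div_cancel_left₀ _ hσne] at h
    have e1 : a (σ*l) - a (σ*w) = c * ∫ t in σ*w..σ*l, g t := hadiff _ _ hσw hσl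
    have e2 : (∫ t in σ*w..σ*l, g t) = σ * ∫ s in w..l, g (σ * s) := by
      rw [← smul_integral_comp_mul_left]
      simp [smul_eq_mul]
    have suffices_ineq : a (σ*l) - a (σ*w) ≤ σ * Real.exp (E (σ*w) - E w) * (a l - a w) := by
      rcases le_total w l with hwl | hlw
      · have e3 : a l - a w = c * ∫ s in w..l, g s := hadiff w l hw hl.le
        have hcmp : (∫ s in w..l, g (σ*s)) ≤
            ∫ s in w..l, Real.exp (E (σ*w) - E w) * g s := by
          apply integral_mono_on hwl (hgσint w l hw hl.le)
            ((hgint w l hw hl.le).const_mul _)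
          intro s hs
          exact hDle s (hw.trans hs.1) hs.1
        rw [intervalIntegral.integral_const_mul] at hcmp
        have hmul := mul_le_mul_of_nonneg_left hcmp (mul_pos hc hσ).le
        have eA : a (σ*l) - a (σ*w) = c * σ * ∫ s in w..l, g (σ*s) := by
          rw [e1, e2]; ring
        have eB : σ * Real.exp (E (σ*w) - E w) * (a l - a w) =
            c * σ * (Real.exp (E (σ*w) - E w) * ∫ s in w..l, g s) := by
          rw [e3]; ring
        linarith [hmul, eA, eB]
      · have e3 : a l - a w = c * ∫ s in w..l, g s := hadiff w l hw hl.le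
        have e4 : (∫ s in w..l, g s) = - ∫ s in l..w, g s := integral_symm l w
        have e5 : (∫ s in w..l, g (σ*s)) = - ∫ s in l..w, g (σ*s) := integral_symm l w
        have hcmp : (∫ s in l..w, Real.exp (E (σ*w) - E w) * g s) ≤
            ∫ s in l..w, g (σ*s) := by
          apply integral_mono_on hlw ((hgint l w hl.le hw).const_mul _)
            (hgσint l w hl.le hw)
          intro s hs
          exact hDge s (lt_of_lt_of_le hl hs.1) hs.2
        rw [intervalIntegral.integral_const_mul] at hcmp
        have hmul := mul_le_mul_of_nonneg_left hcmp (mul_pos hc hσ).le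
        have eA : a (σ*l) - a (σ*w) = -(c * σ * ∫ s in l..w, g (σ*s)) := by
          rw [e1, e2, e5]; ring
        have eB : σ * Real.exp (E (σ*w) - E w) * (a l - a w) =
            -(c * σ * (Real.exp (E (σ*w) - E w) * ∫ s in l..w, g s)) := by
          rw [e3, e4]; ring
        linarith [hmul, eA, eB]
    linarith [suffices_ineq]
  intro μ hfin hμne hnull hinta ainv hinv σ hσ
  have hae : ∀ᵐ l ∂μ, l ∈ Ioi (0:ℝ) := by
    rw [MeasureTheory.ae_iff]
    have hset : {l : ℝ | ¬ l ∈ Ioi (0:ℝ)} = Iic 0 := by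
      ext t; simp [not_lt]
    rw [hset]; exact hnull
  have huniv : μ univ = μ (Ioi 0) := by
    have h := measure_add_measure_compl (μ := μ) (measurableSet_Ioi (a := (0:ℝ)))
    rw [compl_Ioi, hnull, add_zero] at h
    exact h.symm
  have hμpos : 0 < (μ (Ioi 0)).toReal := by
    rw [← huniv]
    apply ENNReal.toReal_pos
    · simpa [Measure.measure_univ_eq_zero] using hμne
    · exact measure_ne_top μ _
  set M : ℝ := (μ (Ioi 0)).toReal with hM
  set xbar : ℝ := (∫ l, a l ∂μ) / M with hxbar
  have hconst_int : ∀ k : ℝ, ∫ _, k ∂μ = M * k := by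
    intro k
    rw [MeasureTheory.integral_const, measureReal_def, huniv]
    simp [hM, smul_eq_mul]
  have ha1ae : ∀ᵐ l ∂μ, 1 ≤ a l := by
    filter_upwards [hae] with l hl
    exact ha_ge_one l (le_of_lt hl)
  have hMa : M ≤ ∫ l, a l ∂μ := by
    have h := integral_mono_ae (integrable_const 1) hinta ha1ae
    rw [hconst_int 1] at h; linarith
  have hxbar1 : 1 ≤ xbar := by
    rw [hxbar, le_div_iff₀ hμpos]; linarith
  have hxbarM : xbar * M = ∫ l, a l ∂μ := div_mul_cancel₀ _ (ne_of_gt hμpos)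
  obtain ⟨l₀, hl₀, hl₀x⟩ : ∃ l₀, 0 ≤ l₀ ∧ xbar ≤ a l₀ := by
    by_contra hcon
    push_neg at hcon
    have hlt : ∀ᵐ l ∂μ, a l < xbar := by
      filter_upwards [hae] with l hl
      exact hcon l (le_of_lt hl)
    have hzero : ∫ l, (xbar - a l) ∂μ = 0 := by
      rw [integral_sub (integrable_const xbar) hinta, hconst_int xbar]
      nlinarith [hxbarM]
    have hnn : 0 ≤ᵐ[μ] fun l => xbar - a l := by
      filter_upwards [hlt] with l hl
      simp only [Pi.zero_apply]
      linarith
    have heq := (integral_eq_zero_iff_of_nonneg_ae hnn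
      ((integrable_const xbar).sub hinta)).mp hzero
    have hfalse : ∀ᵐ l ∂μ, False := by
      filter_upwards [hlt, heq] with l h1 h2
      simp only [Pi.zero_apply] at h2
      linarith
    rw [MeasureTheory.ae_iff] at hfalse
    simp only [not_false_eq_true, setOf_true] at hfalse
    exact hμne (Measure.measure_univ_eq_zero.mp hfalse)
  obtain ⟨w, hwmem, hww⟩ : ∃ w ∈ Icc (0:ℝ) l₀, a w = xbar := by
    have hIVT := intermediate_value_Icc hl₀ (hcont.mono Icc_subset_Ici_self)
    exact hIVT ⟨by rw [ha0]; exact hxbar1, hl₀x⟩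
  have hw0 : 0 ≤ w := hwmem.1
  have hainv : ainv xbar = w := by
    have h := hinv.1 (show w ∈ Ici (0:ℝ) from hw0)
    rw [hww] at h
    exact h
  obtain ⟨hσ0, hσ1⟩ := hσ
  set X : ℝ := Real.exp (E (σ * w) - E w) with hX
  have hptwise : ∀ᵐ l ∂μ, a (σ * l) ≤ a (σ * w) + σ * X * (a l - a w) := by
    filter_upwards [hae] with l hl
    exact key σ ⟨hσ0, hσ1⟩ w hw0 l hl
  have hsub_int : Integrable (fun l => a l - a w) μ := hinta.sub (integrable_const (a w))
  have hmul_int : Integrable (fun l => σ * X * (a l - a w)) μ := hsub_int.const_mul _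
  have hrhs_int : Integrable (fun l => a (σ * w) + σ * X * (a l - a w)) μ :=
    (integrable_const _).add hmul_int
  have hmeas : AEStronglyMeasurable (fun l => a (σ * l)) μ := by
    have hco : ContinuousOn (fun l : ℝ => a (σ * l)) (Ioi 0) := by
      apply hcont.comp (continuous_const.mul continuous_id).continuousOn
      intro t ht
      exact mul_nonneg hσ0 (le_of_lt ht)
    have h := hco.aestronglyMeasurable (μ := μ) measurableSet_Ioi
    rwa [Measure.restrict_eq_self_of_ae_mem hae] at h
  have hlhs_int : Integrable (fun l => a (σ * l)) μ := by
    apply Integrable.mono' hinta hmeas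
    filter_upwards [hae] with l hl
    have h1 : 1 ≤ a (σ * l) := ha_ge_one _ (mul_nonneg hσ0 hl.le)
    have h2 : a (σ * l) ≤ a l :=
      hmono' (mul_nonneg hσ0 hl.le) (Set.mem_Ici.mpr (le_of_lt (Set.mem_Ioi.mp hl))) (mul_le_of_le_one_left hl.le hσ1)
    rw [Real.norm_eq_abs, abs_of_nonneg (by linarith)]
    exact h2
  have hInt := integral_mono_ae hlhs_int hrhs_int hptwise
  have h0 : (∫ l, a l ∂μ) - M * a w = 0 := by rw [hww]; linarith [hxbarM]
  have hRHS : ∫ l, (a (σ * w) + σ * X * (a l - a w)) ∂μ = M * a (σ * w) := by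
    rw [integral_add (integrable_const _) hmul_int, hconst_int,
      MeasureTheory.integral_const_mul, integral_sub hinta (integrable_const (a w)),
      hconst_int, h0, mul_zero, add_zero]
  rw [hainv]
  calc ∫ l, a (σ * l) ∂μ ≤ ∫ l, (a (σ * w) + σ * X * (a l - a w)) ∂μ := hInt
    _ = M * a (σ * w) := hRHS
end

section
/- Let α : (0,∞) → (0,∞) be a locally integrable function satisfying α(σλ) ≤ α(λ)/σ for all σ ∈ (0,1] and all λ > 0, let c > 0, and define a(λ) = 1 + c·∫₀^λ exp(∫₁^t α(s) ds) dt for λ ≥ 0, assuming t ↦ exp(∫₁^t α(s) ds) is integrable on every interval [0,λ]. Then for every σ ∈ (0,1], the function λ ↦ a(a⁻¹(λ)/σ), defined on the range of a, is convex, where a⁻¹ is the inverse of the continuous strictly increasing function a. -/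
open MeasureTheory Set intervalIntegral

/-- **Convexity of `λ ↦ a(a⁻¹(λ)/σ)`**, the key auxiliary claim in the proof of
the dilational interpolation inequality (Theorem 2).  With
`a(λ) = 1 + c ∫₀^λ exp(∫₁^t α(s) ds) dt` generated from a locally integrable
`α : (0,∞) → (0,∞)` obeying the scaling relation `α(σλ) ≤ α(λ)/σ` for
`σ ∈ (0,1]`, and `ainv` the inverse of the continuous strictly increasing
function `a`, the map `λ ↦ a(ainv(λ)/σ)` is convex on the range of `a`
for every `σ ∈ (0,1]`. -/
theorem dilational_convexity
    (α : ℝ → ℝ)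
    (hα_loc : LocallyIntegrableOn α (Ioi 0))
    (hα_pos : ∀ x ∈ Ioi (0:ℝ), 0 < α x)
    (hα_scale : ∀ σ ∈ Ioc (0:ℝ) 1, ∀ l > (0:ℝ), α (σ * l) ≤ α l / σ)
    (c : ℝ) (hc : 0 < c)
    (hint : ∀ l : ℝ, 0 ≤ l →
      IntervalIntegrable (fun t => Real.exp (∫ s in (1:ℝ)..t, α s)) volume 0 l)
    (a : ℝ → ℝ)
    (ha : ∀ l : ℝ, 0 ≤ l →
      a l = 1 + c * ∫ t in (0:ℝ)..l, Real.exp (∫ s in (1:ℝ)..t, α s))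
    (ainv : ℝ → ℝ) (hainv : InvOn ainv a (Ici 0) (a '' Ici 0)) :
    ∀ σ ∈ Ioc (0:ℝ) 1, ConvexOn ℝ (a '' Ici 0) (fun x => a (ainv x / σ)) := by
  intro σ hσ
  obtain ⟨hσ0, hσ1⟩ := hσ
  have hσne : σ ≠ 0 := ne_of_gt hσ0
  set E : ℝ → ℝ := fun t => Real.exp (∫ s in (1:ℝ)..t, α s) with hE
  -- α is interval integrable between positive endpoints
  have hαint : ∀ p q : ℝ, 0 < p → 0 < q → IntervalIntegrable α volume p q := by
    intro p q hp hq
    rw [intervalIntegrable_iff]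
    have hsub : uIcc p q ⊆ Ioi 0 := by
      intro x hx
      have : min p q ≤ x := hx.1
      have : (0:ℝ) < min p q := lt_min hp hq
      exact lt_of_lt_of_le this hx.1
    exact (hα_loc.integrableOn_compact_subset hsub isCompact_uIcc).mono_set
      Ioc_subset_Icc_self
  -- E is interval integrable between nonneg endpoints
  have hE_int : ∀ u v : ℝ, 0 ≤ u → 0 ≤ v → IntervalIntegrable E volume u v := by
    intro u v hu hv
    have h := hint (max u v) (le_max_of_le_left hu)
    refine h.mono_set ?_
    apply uIcc_subset_uIcc
    · rw [uIcc_of_le (le_max_of_le_left hu)]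
      exact ⟨hu, le_max_left _ _⟩
    · rw [uIcc_of_le (le_max_of_le_left hu)]
      exact ⟨hv, le_max_right _ _⟩
  have hE_pos : ∀ t, 0 < E t := fun t => Real.exp_pos _
  -- difference formula
  have hadiff : ∀ u v : ℝ, 0 ≤ u → 0 ≤ v → a v - a u = c * ∫ t in u..v, E t := by
    intro u v hu hv
    have hsub : (∫ t in (0:ℝ)..v, E t) - ∫ t in (0:ℝ)..u, E t = ∫ t in u..v, E t :=
      integral_interval_sub_left (hint v hv) (hint u hu)
    rw [ha v hv, ha u hu, ← hsub]; ring
  -- a strictly monotone on Ici 0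
  have hamono : ∀ u v : ℝ, 0 ≤ u → u < v → a u < a v := by
    intro u v hu huv
    have h1 : 0 < ∫ t in u..v, E t :=
      intervalIntegral_pos_of_pos_on (hE_int u v hu (hu.trans huv.le))
        (fun x _ => hE_pos x) huv
    nlinarith [hadiff u v hu (hu.trans huv.le)]
  have hamono' : ∀ u v : ℝ, 0 ≤ u → u ≤ v → a u ≤ a v := by
    intro u v hu huv
    rcases eq_or_lt_of_le huv with rfl | h
    · exact le_rfl
    · exact (hamono u v hu h).le
  -- the defect function D
  set D : ℝ → ℝ := fun u => ∫ s in u..(u / σ), α s with hD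
  have hself : ∀ u : ℝ, 0 ≤ u → u ≤ u / σ := by
    intro u hu
    rw [le_div_iff₀ hσ0]
    nlinarith
  have hDnonneg : ∀ u : ℝ, 0 ≤ u → 0 ≤ D u := by
    intro u hu
    rcases eq_or_lt_of_le hu with rfl | hu'
    · simp [hD]
    · exact intervalIntegral.integral_nonneg (hself u hu)
        (fun x hx => (hα_pos x (lt_of_lt_of_le hu' hx.1)).le)
  -- monotonicity of D
  have hDmono : ∀ r u : ℝ, 0 < r → r ≤ u → D r ≤ D u := by
    intro r u hr hru
    have hu : 0 < u := lt_of_lt_of_le hr hru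
    have hrσ : 0 < r / σ := div_pos hr hσ0
    have huσ : 0 < u / σ := div_pos hu hσ0
    have h1 : D r + (∫ s in (r/σ)..(u/σ), α s) = ∫ s in r..(u/σ), α s :=
      integral_add_adjacent_intervals (hαint r (r/σ) hr hrσ) (hαint (r/σ) (u/σ) hrσ huσ)
    have h2 : (∫ s in r..u, α s) + D u = ∫ s in r..(u/σ), α s :=
      integral_add_adjacent_intervals (hαint r u hr hu) (hαint u (u/σ) hu huσ)
    have hcomp : (∫ t in r..u, α (t / σ)) = σ * ∫ t in (r/σ)..(u/σ), α t := by
      simpa [smul_eq_mul] using integral_comp_div (a := r) (b := u) α hσne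
    have hint2 : IntervalIntegrable (fun t => α (t / σ)) volume r u := by
      have h := (hαint (r/σ) (u/σ) hrσ huσ).comp_mul_right (c := σ⁻¹)
      have e1 : r / σ / σ⁻¹ = r := by field_simp
      have e2 : u / σ / σ⁻¹ = u := by field_simp
      rw [e1, e2] at h
      simpa [div_eq_mul_inv] using h
    have hptw : ∀ t ∈ Icc r u, σ * α t ≤ α (t / σ) := by
      intro t ht
      have ht0 : 0 < t := lt_of_lt_of_le hr ht.1
      have hs := hα_scale σ ⟨hσ0, hσ1⟩ (t / σ) (div_pos ht0 hσ0)
      rw [mul_div_cancel₀ _ hσne] at hs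
      calc σ * α t ≤ σ * (α (t / σ) / σ) := by
            exact mul_le_mul_of_nonneg_left hs hσ0.le
        _ = α (t / σ) := by field_simp
    have hmono := intervalIntegral.integral_mono_on hru
      ((hαint r u hr hu).const_mul σ) hint2 hptw
    have hconst : (∫ t in r..u, σ * α t) = σ * ∫ t in r..u, α t := by
      simpa using intervalIntegral.integral_const_mul σ α
    rw [hconst, hcomp] at hmono
    have : (∫ t in r..u, α t) ≤ ∫ t in (r/σ)..(u/σ), α t := by
      have := (mul_le_mul_iff_right₀ hσ0).mp hmono
      exact this
    linarith
  -- composition identity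
  have hEcomp : ∀ t : ℝ, 0 < t → E (t / σ) = Real.exp (D t) * E t := by
    intro t ht
    have htσ : 0 < t / σ := div_pos ht hσ0
    have hadd : (∫ s in (1:ℝ)..t, α s) + (∫ s in t..(t/σ), α s) = ∫ s in (1:ℝ)..(t/σ), α s :=
      integral_add_adjacent_intervals (hαint 1 t one_pos ht) (hαint t (t/σ) ht htσ)
    simp only [hE, hD, ← hadd, Real.exp_add]
    ring
  -- key cross-multiplied slope inequality
  have key : ∀ u v w : ℝ, 0 ≤ u → u < v → v < w →
      (a (v/σ) - a (u/σ)) * (a w - a v) ≤ (a (w/σ) - a (v/σ)) * (a v - a u) := by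
    intro u v w hu huv hvw
    have hv : 0 < v := lt_of_le_of_lt hu huv
    have hw : 0 < w := hv.trans hvw
    have huσ : 0 ≤ u / σ := div_nonneg hu hσ0.le
    have hvσ : 0 ≤ v / σ := (div_pos hv hσ0).le
    have hwσ : 0 ≤ w / σ := (div_pos hw hσ0).le
    set K : ℝ := Real.exp (D v) / σ with hK
    have hK0 : 0 < K := div_pos (Real.exp_pos _) hσ0
    -- integrability of t ↦ E (t/σ)
    have hintc : ∀ p q : ℝ, 0 ≤ p → 0 ≤ q →
        IntervalIntegrable (fun t => E (t / σ)) volume p q := by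
      intro p q hp hq
      have h := (hE_int (p/σ) (q/σ) (div_nonneg hp hσ0.le) (div_nonneg hq hσ0.le)).comp_mul_right (c := σ⁻¹)
      have e1 : p / σ / σ⁻¹ = p := by field_simp
      have e2 : q / σ / σ⁻¹ = q := by field_simp
      rw [e1, e2] at h
      simpa [div_eq_mul_inv] using h
    -- substitution identity
    have hsubst : ∀ p q : ℝ, (∫ t in p..q, E (t / σ)) = σ * ∫ t in (p/σ)..(q/σ), E t := by
      intro p q
      simpa [smul_eq_mul] using integral_comp_div (a := p) (b := q) E hσne
    -- claim 1 : a (v/σ) - a (u/σ) ≤ K * (a v - a u)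
    have hptw1 : ∀ t ∈ Icc u v, E (t / σ) ≤ Real.exp (D v) * E t := by
      intro t ht
      rcases eq_or_lt_of_le (hu.trans ht.1) with rfl | ht0
      · simp only [zero_div]
        have h1 : (1:ℝ) ≤ Real.exp (D v) := by
          rw [← Real.exp_zero]
          exact Real.exp_le_exp.mpr (hDnonneg v hv.le)
        nlinarith [hE_pos (0:ℝ)]
      · rw [hEcomp t ht0]
        exact mul_le_mul_of_nonneg_right
          (Real.exp_le_exp.mpr (hDmono t v ht0 ht.2)) (hE_pos t).le
    have hmono1 := intervalIntegral.integral_mono_on huv.le (hintc u v hu hv.le)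
      ((hE_int u v hu hv.le).const_mul (Real.exp (D v))) hptw1
    have hc1 : (∫ t in u..v, Real.exp (D v) * E t) = Real.exp (D v) * ∫ t in u..v, E t := by
      simpa using intervalIntegral.integral_const_mul (Real.exp (D v)) E
    rw [hsubst u v, hc1] at hmono1
    have claim1 : a (v/σ) - a (u/σ) ≤ K * (a v - a u) := by
      rw [hadiff (u/σ) (v/σ) huσ hvσ, hadiff u v hu hv.le, hK]
      have : (∫ t in (u/σ)..(v/σ), E t) ≤ (Real.exp (D v) / σ) * ∫ t in u..v, E t := by
        rw [div_mul_eq_mul_div, le_div_iff₀ hσ0]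
        nlinarith
      nlinarith
    -- claim 2 : K * (a w - a v) ≤ a (w/σ) - a (v/σ)
    have hptw2 : ∀ t ∈ Icc v w, Real.exp (D v) * E t ≤ E (t / σ) := by
      intro t ht
      have ht0 : 0 < t := lt_of_lt_of_le hv ht.1
      rw [hEcomp t ht0]
      exact mul_le_mul_of_nonneg_right
        (Real.exp_le_exp.mpr (hDmono v t hv ht.1)) (hE_pos t).le
    have hmono2 := intervalIntegral.integral_mono_on hvw.le
      ((hE_int v w hv.le hw.le).const_mul (Real.exp (D v))) (hintc v w hv.le hw.le) hptw2
    have hc2 : (∫ t in v..w, Real.exp (D v) * E t) = Real.exp (D v) * ∫ t in v..w, E t := by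
      simpa using intervalIntegral.integral_const_mul (Real.exp (D v)) E
    rw [hsubst v w, hc2] at hmono2
    have claim2 : K * (a w - a v) ≤ a (w/σ) - a (v/σ) := by
      rw [hadiff (v/σ) (w/σ) hvσ hwσ, hadiff v w hv.le hw.le, hK]
      have : (Real.exp (D v) / σ) * (∫ t in v..w, E t) ≤ ∫ t in (v/σ)..(w/σ), E t := by
        rw [div_mul_eq_mul_div, div_le_iff₀ hσ0]
        nlinarith
      nlinarith
    -- combine
    have hpos1 : 0 ≤ a v - a u := by nlinarith [hamono u v hu huv]
    have hpos2 : 0 ≤ a w - a v := by nlinarith [hamono v w hv.le hvw]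
    calc (a (v/σ) - a (u/σ)) * (a w - a v) ≤ (K * (a v - a u)) * (a w - a v) :=
          mul_le_mul_of_nonneg_right claim1 hpos2
      _ = (K * (a w - a v)) * (a v - a u) := by ring
      _ ≤ (a (w/σ) - a (v/σ)) * (a v - a u) := mul_le_mul_of_nonneg_right claim2 hpos1
  -- continuity of a on Ici 0
  have hcont : ContinuousOn a (Ici 0) := by
    intro x hx
    have hx1 : x ∈ Icc (0:ℝ) (x + 1) := ⟨hx, by linarith [hx.out]⟩
    have h01 : (0:ℝ) ≤ x + 1 := le_trans hx.out (by linarith)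
    have hco : ContinuousOn (fun l => 1 + c * ∫ t in (0:ℝ)..l, E t) (Icc 0 (x+1)) := by
      have hprim : ContinuousOn (fun l => ∫ t in (0:ℝ)..l, E t) (uIcc 0 (x+1)) :=
        intervalIntegral.continuousOn_primitive_interval' (hint (x+1) h01) left_mem_uIcc
      rw [uIcc_of_le h01] at hprim
      exact continuousOn_const.add (continuousOn_const.mul hprim)
    have heq : EqOn a (fun l => 1 + c * ∫ t in (0:ℝ)..l, E t) (Icc 0 (x+1)) :=
      fun l hl => ha l hl.1
    have hcw : ContinuousWithinAt a (Icc 0 (x+1)) x :=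
      (hco.congr heq).continuousWithinAt hx1
    refine hcw.mono_of_mem_nhdsWithin ?_
    have : Ici (0:ℝ) ∩ Iio (x+1) ⊆ Icc 0 (x+1) := fun y hy => ⟨hy.1, hy.2.le⟩
    exact Filter.mem_of_superset
      (Filter.inter_mem self_mem_nhdsWithin
        (mem_nhdsWithin_of_mem_nhds (Iio_mem_nhds (lt_add_one x)))) this
  -- convexity of the image set
  have hconv : Convex ℝ (a '' Ici 0) := by
    rw [convex_iff_ordConnected]
    constructor
    rintro x ⟨p, hp, rfl⟩ y ⟨q, hq, rfl⟩
    rcases le_or_gt p q with hpq | hqp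
    · intro z hz
      have hIcc : Icc (a p) (a q) ⊆ a '' Icc p q :=
        intermediate_value_Icc hpq (hcont.mono (fun t ht => le_trans hp ht.1))
      obtain ⟨t, ht, rfl⟩ := hIcc hz
      exact ⟨t, le_trans hp ht.1, rfl⟩
    · have : a q < a p := hamono q p hq hqp
      rw [Icc_eq_empty (by linarith)]
      exact empty_subset _
  -- conclude
  apply convexOn_of_slope_mono_adjacent hconv
  intro x y z hx hz hxy hyz
  have hy : y ∈ a '' Ici 0 := hconv.ordConnected.out hx hz ⟨hxy.le, hyz.le⟩
  obtain ⟨u₁, hu₁, rfl⟩ := hx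
  obtain ⟨u₂, hu₂, hy2⟩ := hy
  obtain ⟨u₃, hu₃, hz3⟩ := hz
  subst hy2; subst hz3
  have h12 : u₁ < u₂ := by
    by_contra h
    push_neg at h
    exact absurd hxy (not_lt.mpr (hamono' u₂ u₁ hu₂ h))
  have h23 : u₂ < u₃ := by
    by_contra h
    push_neg at h
    exact absurd hyz (not_lt.mpr (hamono' u₃ u₂ hu₃ h))
  simp only [hainv.1 hu₁, hainv.1 hu₂, hainv.1 hu₃]
  rw [div_le_div_iff₀ (by nlinarith [hamono u₁ u₂ hu₁ h12]) (by nlinarith [hamono u₂ u₃ hu₂ h23])]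
  have := key u₁ u₂ u₃ hu₁ h12 h23
  nlinarith [this]
end

section
/- Let h : (0,∞) → (0,∞) be concave and nondecreasing, let C > 0 and ε > 0, and let r ∈ (0, 2ε] and x ≥ 0 satisfy x² ≤ r²·h(C²/r²). Then x ≤ 2ε·√(h(C²·ε⁻²)). -/
open Set

/-- For a concave positive function on `(0,∞)`, `h x / x` is nonincreasing:
for `0 < a ≤ b`, `a * h b ≤ b * h a`. -/
lemma concave_div_antitone (h : ℝ → ℝ)
    (hconc : ConcaveOn ℝ (Ioi 0) h)
    (hpos : ∀ x ∈ Ioi (0:ℝ), 0 < h x)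
    {a b : ℝ} (ha : 0 < a) (hab : a ≤ b) :
    a * h b ≤ b * h a := by
  rcases eq_or_lt_of_le hab with rfl | hlt
  · rfl
  have hb : 0 < b := ha.trans hlt
  -- For c ∈ (0,a): ((a-c)/(b-c)) * h b ≤ h a
  have key : ∀ c ∈ Ioo (0:ℝ) a, ((a - c) / (b - c)) * h b ≤ h a := by
    intro c hc
    have hc0 : 0 < c := hc.1
    have hca : c < a := hc.2
    have hbc : 0 < b - c := by linarith
    set l : ℝ := (a - c) / (b - c) with hl
    have hl0 : 0 ≤ l := div_nonneg (by linarith) hbc.le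
    have hl1 : l ≤ 1 := by
      rw [hl, div_le_one hbc]; linarith
    have hcomb : l * b + (1 - l) * c = a := by
      field_simp [hl]
      rw [hl]; linear_combination div_mul_cancel₀ (a - c) hbc.ne'
    have hcv := hconc.2 (mem_Ioi.mpr hb) (mem_Ioi.mpr hc0) hl0 (sub_nonneg.mpr hl1)
      (by ring : l + (1 - l) = 1)
    simp only [smul_eq_mul] at hcv
    rw [hcomb] at hcv
    have hhc : 0 < h c := hpos c (mem_Ioi.mpr hc0)
    nlinarith
  have htend : Filter.Tendsto (fun c => ((a - c) / (b - c)) * h b)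
      (nhdsWithin 0 (Ioi 0)) (nhds ((a / b) * h b)) := by
    have hcont : ContinuousAt (fun c => ((a - c) / (b - c)) * h b) 0 := by
      apply ContinuousAt.mul _ continuousAt_const
      exact ContinuousAt.div (by fun_prop) (by fun_prop) (by simpa using hb.ne')
    have h2 := hcont.continuousWithinAt (s := Ioi (0:ℝ))
    unfold ContinuousWithinAt at h2
    simpa using h2
  have hfinal : (a / b) * h b ≤ h a := by
    apply le_of_tendsto htend
    filter_upwards [Ioo_mem_nhdsGT_of_mem (⟨le_refl (0:ℝ), ha⟩ : (0:ℝ) ∈ Ico 0 a)] with c hc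
    exact key c hc
  rw [div_mul_eq_mul_div, div_le_iff₀ hb] at hfinal
  linarith

/-- **General error bound under the discrepancy ansatz** (equation (8)):
if `h` is concave, nondecreasing and positive on `(0,∞)`, `C, ε > 0`,
`r ∈ (0, 2ε]`, `x ≥ 0` and `x² ≤ r² h(C²/r²)`, then `x ≤ 2ε √(h(C²ε⁻²))`. -/
theorem error_bound_discrepancy
    (h : ℝ → ℝ)
    (hconc : ConcaveOn ℝ (Ioi 0) h)
    (hmono : MonotoneOn h (Ioi 0))
    (hpos : ∀ x ∈ Ioi (0:ℝ), 0 < h x)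
    (C ε r x : ℝ) (hC : 0 < C) (hε : 0 < ε)
    (hr : r ∈ Ioc (0:ℝ) (2 * ε)) (hx : 0 ≤ x)
    (hineq : x ^ 2 ≤ r ^ 2 * h (C ^ 2 / r ^ 2)) :
    x ≤ 2 * ε * Real.sqrt (h (C ^ 2 / ε ^ 2)) := by
  obtain ⟨hr0, hr2⟩ := hr
  have hu : (0:ℝ) < C ^ 2 / ε ^ 2 := by positivity
  have hb : (0:ℝ) < C ^ 2 / r ^ 2 := by positivity
  have hhu : 0 < h (C ^ 2 / ε ^ 2) := hpos _ hu
  have hhb : 0 < h (C ^ 2 / r ^ 2) := hpos _ hb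
  -- main step: r² h(C²/r²) ≤ 4ε² h(C²/ε²)
  have hmain : r ^ 2 * h (C ^ 2 / r ^ 2) ≤ 4 * ε ^ 2 * h (C ^ 2 / ε ^ 2) := by
    rcases le_or_gt (C ^ 2 / r ^ 2) (C ^ 2 / ε ^ 2) with hle | hgt
    · have h1 : h (C ^ 2 / r ^ 2) ≤ h (C ^ 2 / ε ^ 2) := hmono (mem_Ioi.mpr hb) (mem_Ioi.mpr hu) hle
      have hr4 : r ^ 2 ≤ 4 * ε ^ 2 := by nlinarith
      nlinarith [mul_le_mul hr4 h1 hhb.le (by positivity : (0:ℝ) ≤ 4 * ε ^ 2)]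
    · have := concave_div_antitone h hconc hpos hu hgt.le
      -- (C²/ε²) * h(C²/r²) ≤ (C²/r²) * h(C²/ε²)
      have h2 : r ^ 2 * h (C ^ 2 / r ^ 2) ≤ ε ^ 2 * h (C ^ 2 / ε ^ 2) := by
        rw [div_mul_eq_mul_div, div_mul_eq_mul_div, div_le_div_iff₀ (by positivity) (by positivity)] at this
        nlinarith [mul_pos hC hC]
      nlinarith
  have hx2 : x ^ 2 ≤ (2 * ε * Real.sqrt (h (C ^ 2 / ε ^ 2))) ^ 2 := by
    have : (2 * ε * Real.sqrt (h (C ^ 2 / ε ^ 2))) ^ 2 = 4 * ε ^ 2 * h (C ^ 2 / ε ^ 2) := by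
      rw [mul_pow, mul_pow, Real.sq_sqrt hhu.le]; ring
    linarith
  have hpos' : 0 ≤ 2 * ε * Real.sqrt (h (C ^ 2 / ε ^ 2)) := by positivity
  nlinarith
end

section
/- Let C > 0 and ε > 0 with 2ε ≤ C·e^{−1/2}, and let r ∈ (0, 2ε] and x ≥ 0 satisfy x² ≤ r²·log(C²/r²). Then x ≤ 2·√(2·log(C/ε))·ε. -/
open Set

/-- **Error bound for the exponential source condition** (equation (9)):
if `C, ε > 0` with `2ε ≤ C e^(-1/2)`, `r ∈ (0, 2ε]`, `x ≥ 0` and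
`x² ≤ r² log(C²/r²)`, then `x ≤ 2 √(2 log(C/ε)) ε`. -/
theorem error_bound_log
    (C ε r x : ℝ) (hC : 0 < C) (hε : 0 < ε)
    (hεsmall : 2 * ε ≤ C * Real.exp (-(1 / 2)))
    (hr : r ∈ Ioc (0:ℝ) (2 * ε)) (hx : 0 ≤ x)
    (hineq : x ^ 2 ≤ r ^ 2 * Real.log (C ^ 2 / r ^ 2)) :
    x ≤ 2 * Real.sqrt (2 * Real.log (C / ε)) * ε := by
  obtain ⟨hr0, hrs⟩ := hr
  set s : ℝ := 2 * ε with hs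
  have hs0 : 0 < s := by positivity
  -- L := log (C / s) ≥ 1/2
  have hL : (1 : ℝ) / 2 ≤ Real.log (C / s) := by
    have h1 : Real.exp (1 / 2) ≤ C / s := by
      rw [le_div_iff₀ hs0]
      calc Real.exp (1/2) * s ≤ Real.exp (1/2) * (C * Real.exp (-(1/2))) := by
            exact mul_le_mul_of_nonneg_left hεsmall (Real.exp_pos _).le
        _ = C := by rw [mul_comm C, ← mul_assoc, ← Real.exp_add]; norm_num
    calc (1:ℝ)/2 = Real.log (Real.exp (1/2)) := (Real.log_exp _).symm
      _ ≤ Real.log (C / s) := Real.log_le_log (Real.exp_pos _) h1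
  -- rewrite log(C²/r²) = 2 log(C/r)
  have hlogr : Real.log (C ^ 2 / r ^ 2) = 2 * Real.log (C / r) := by
    rw [← div_pow, Real.log_pow]; norm_num
  -- monotonicity: r² log(C/r) ≤ s² log(C/s)
  have hmono : r ^ 2 * Real.log (C / r) ≤ s ^ 2 * Real.log (C / s) := by
    have hsplit : Real.log (C / r) = Real.log (C / s) + Real.log (s / r) := by
      rw [← Real.log_mul (by positivity) (by positivity)]
      congr 1; field_simp
    have hlog_sr : Real.log (s / r) ≤ s / r - 1 :=
      Real.log_le_sub_one_of_pos (by positivity)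
    have hkey : r ^ 2 * Real.log (s / r) ≤ Real.log (C / s) * (s ^ 2 - r ^ 2) := by
      have h1 : r ^ 2 * Real.log (s / r) ≤ r * (s - r) := by
        have := mul_le_mul_of_nonneg_left hlog_sr (by positivity : (0:ℝ) ≤ r ^ 2)
        calc r ^ 2 * Real.log (s / r) ≤ r ^ 2 * (s / r - 1) := this
          _ = r * (s - r) := by field_simp
      have h2 : r * (s - r) ≤ Real.log (C / s) * (s ^ 2 - r ^ 2) := by
        have hfac : s ^ 2 - r ^ 2 = (s - r) * (s + r) := by ring
        rw [hfac]
        have hsr : 0 ≤ s - r := by linarith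
        have : r * (s - r) ≤ (1/2 * (s + r)) * (s - r) := by nlinarith
        calc r * (s - r) ≤ (1/2 * (s + r)) * (s - r) := this
          _ ≤ (Real.log (C / s) * (s + r)) * (s - r) := by
              apply mul_le_mul_of_nonneg_right _ hsr
              apply mul_le_mul_of_nonneg_right hL (by linarith)
          _ = Real.log (C / s) * ((s - r) * (s + r)) := by ring
      linarith
    calc r ^ 2 * Real.log (C / r)
        = r ^ 2 * Real.log (C / s) + r ^ 2 * Real.log (s / r) := by rw [hsplit]; ring
      _ ≤ r ^ 2 * Real.log (C / s) + Real.log (C / s) * (s ^ 2 - r ^ 2) := by linarith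
      _ = s ^ 2 * Real.log (C / s) := by ring
  -- log(C/s) ≤ log(C/ε)
  have hLle : Real.log (C / s) ≤ Real.log (C / ε) := by
    apply Real.log_le_log (by positivity)
    apply div_le_div_of_nonneg_left hC.le hε
    linarith
  have hLε : 0 < Real.log (C / ε) := lt_of_lt_of_le (by norm_num) (hL.trans hLle)
  -- bound x² by RHS²
  have hRHS : 0 ≤ 2 * Real.sqrt (2 * Real.log (C / ε)) * ε := by positivity
  have hsq : x ^ 2 ≤ (2 * Real.sqrt (2 * Real.log (C / ε)) * ε) ^ 2 := by
    have hsqrt : Real.sqrt (2 * Real.log (C / ε)) ^ 2 = 2 * Real.log (C / ε) :=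
      Real.sq_sqrt (by positivity)
    have : (2 * Real.sqrt (2 * Real.log (C / ε)) * ε) ^ 2
        = 8 * Real.log (C / ε) * ε ^ 2 := by
      rw [mul_pow, mul_pow, hsqrt]; ring
    rw [this]
    calc x ^ 2 ≤ r ^ 2 * (2 * Real.log (C / r)) := by rw [← hlogr]; exact hineq
      _ = 2 * (r ^ 2 * Real.log (C / r)) := by ring
      _ ≤ 2 * (s ^ 2 * Real.log (C / s)) := by linarith
      _ ≤ 2 * (s ^ 2 * Real.log (C / ε)) := by nlinarith [sq_nonneg s]
      _ = 8 * Real.log (C / ε) * ε ^ 2 := by rw [hs]; ring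
  calc x = Real.sqrt (x ^ 2) := (Real.sqrt_sq hx).symm
    _ ≤ Real.sqrt ((2 * Real.sqrt (2 * Real.log (C / ε)) * ε) ^ 2) :=
        Real.sqrt_le_sqrt hsq
    _ = 2 * Real.sqrt (2 * Real.log (C / ε)) * ε := Real.sqrt_sq hRHS
end

section
/- Let R > 1 and C > 0. There exists ε₀ > 0 such that for every ε ∈ (0, ε₀] and every sequence (x_k)_{k≥1} of nonnegative reals satisfying ∑_{k≥1} x_k ≤ ε² and ∑_{k≥1} R^{2k} x_k ≤ C², one has √(∑_{k≥1} k² x_k) ≤ 2ε·log(C/ε)/log(R). -/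
lemma key_pointwise (L K t D : ℝ) (hKL : 1 ≤ K * L) (hK : 1 ≤ K)
    (ht : 1 ≤ t) (hD : D = Real.exp (2 * K * L)) :
    t ^ 2 ≤ K ^ 2 + K ^ 2 / D * Real.exp (2 * t * L) := by
  have hK0 : (0:ℝ) < K := lt_of_lt_of_le one_pos hK
  have hD0 : 0 < D := hD ▸ Real.exp_pos _
  rcases le_or_gt t K with h | h
  · have h1 : t ^ 2 ≤ K ^ 2 := by nlinarith
    have h2 : 0 ≤ K ^ 2 / D * Real.exp (2 * t * L) :=
      mul_nonneg (div_nonneg (sq_nonneg K) hD0.le) (Real.exp_pos _).le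
    linarith
  · have ht0 : (0:ℝ) < t := lt_of_lt_of_le one_pos ht
    have hlog : Real.log (t / K) ≤ t / K - 1 :=
      Real.log_le_sub_one_of_pos (div_pos ht0 hK0)
    have hLK : 1 / K ≤ L := by
      rw [div_le_iff₀ hK0]; linarith [mul_comm K L]
    have h2 : Real.log (t / K) ≤ L * (t - K) := by
      have heq : t / K - 1 = (t - K) / K := by field_simp
      rw [heq] at hlog
      refine hlog.trans ?_
      rw [div_le_iff₀ hK0]
      have htK : 0 ≤ t - K := by linarith
      nlinarith
    have h3 : (t / K) ^ 2 ≤ Real.exp (2 * L * (t - K)) := by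
      have hh := Real.exp_le_exp.mpr (mul_le_mul_of_nonneg_left h2 (by norm_num : (0:ℝ) ≤ 2))
      have heq : Real.exp (2 * Real.log (t / K)) = (t / K) ^ 2 := by
        rw [mul_comm, Real.exp_mul, Real.exp_log (div_pos ht0 hK0)]
        norm_num
      calc (t/K)^2 = Real.exp (2 * Real.log (t / K)) := heq.symm
        _ ≤ Real.exp (2 * (L * (t - K))) := hh
        _ = Real.exp (2 * L * (t - K)) := by ring_nf
    have h4 : t ^ 2 ≤ K ^ 2 * Real.exp (2 * L * (t - K)) := by
      have hh := mul_le_mul_of_nonneg_left h3 (sq_nonneg K)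
      calc t ^ 2 = K ^ 2 * (t / K) ^ 2 := by field_simp
        _ ≤ K ^ 2 * Real.exp (2 * L * (t - K)) := hh
    have h5 : K ^ 2 * Real.exp (2 * L * (t - K)) = K ^ 2 / D * Real.exp (2 * t * L) := by
      rw [hD, div_mul_eq_mul_div, mul_div_assoc, ← Real.exp_sub]
      ring_nf
    have hKnn : 0 ≤ K ^ 2 := sq_nonneg K
    rw [h5] at h4
    linarith

/-- **Error bound for the differentiation of analytic functions** (Section 3.1).
For `R > 1` and `C > 0` there is an `ε₀ > 0` such that for every
`ε ∈ (0, ε₀]` and every sequence `(x_k)_{k ≥ 1}` of nonnegative reals with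
`∑ x_k ≤ ε²` and `∑ R^{2k} x_k ≤ C²` (the latter series being summable),
`√(∑ k² x_k) ≤ 2 ε log(C/ε) / log R`.  (Sequences indexed by `k ≥ 1` are
modelled by `fun k : ℕ => x (k+1)`.) -/
theorem analytic_differentiation_error_bound
    (R C : ℝ) (hR : 1 < R) (hC : 0 < C) :
    ∃ ε₀ > (0:ℝ), ∀ ε : ℝ, 0 < ε → ε ≤ ε₀ →
      ∀ x : ℕ → ℝ, (∀ k, 0 ≤ x k) →
        Summable (fun k : ℕ => R ^ (2 * (k + 1)) * x (k + 1)) →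
        (∑' k : ℕ, x (k + 1)) ≤ ε ^ 2 →
        (∑' k : ℕ, R ^ (2 * (k + 1)) * x (k + 1)) ≤ C ^ 2 →
        Real.sqrt (∑' k : ℕ, ((k : ℝ) + 1) ^ 2 * x (k + 1)) ≤
          2 * ε * Real.log (C / ε) / Real.log R := by
  set L := Real.log R with hLdef
  have hL : 0 < L := Real.log_pos hR
  set a : ℝ := max 1 (1 / L) with hadef
  have ha1 : 1 ≤ a := le_max_left _ _
  have haL : 1 ≤ a * L := by
    have : 1 / L ≤ a := le_max_right _ _
    calc (1:ℝ) = (1 / L) * L := by field_simp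
      _ ≤ a * L := mul_le_mul_of_nonneg_right this hL.le
  refine ⟨C * Real.exp (-(a * L)), by positivity, ?_⟩
  intro ε hε hεle x hx hsumR hs1 hs2
  have hR0 : (0:ℝ) < R := lt_trans one_pos hR
  have hCε : Real.exp (a * L) ≤ C / ε := by
    rw [le_div_iff₀ hε]
    calc Real.exp (a * L) * ε ≤ Real.exp (a * L) * (C * Real.exp (-(a * L))) :=
          mul_le_mul_of_nonneg_left hεle (Real.exp_pos _).le
      _ = C := by rw [← mul_assoc, mul_comm (Real.exp _) C, mul_assoc, ← Real.exp_add]; simp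
  set K : ℝ := Real.log (C / ε) / L with hKdef
  have hlogCε : a * L ≤ Real.log (C / ε) := by
    have := Real.log_le_log (Real.exp_pos _) hCε
    rwa [Real.log_exp] at this
  have hKa : a ≤ K := by
    rw [hKdef, le_div_iff₀ hL]; linarith
  have hK1 : 1 ≤ K := le_trans ha1 hKa
  have hK0 : (0:ℝ) < K := lt_of_lt_of_le one_pos hK1
  have hKL : K * L = Real.log (C / ε) := by
    rw [hKdef]; field_simp
  have hKL1 : 1 ≤ K * L := by
    rw [hKL]; linarith [mul_le_mul_of_nonneg_right hKa hL.le, haL]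
  set D : ℝ := (C / ε) ^ 2 with hDdef
  have hCε0 : 0 < C / ε := div_pos hC hε
  have hD : D = Real.exp (2 * K * L) := by
    rw [hDdef, mul_assoc, hKL, mul_comm, Real.exp_mul, Real.exp_log hCε0]
    norm_num
  have hD0 : 0 < D := by positivity
  -- pointwise bound
  have hpt : ∀ k : ℕ, ((k:ℝ) + 1) ^ 2 * x (k + 1) ≤
      K ^ 2 * x (k + 1) + K ^ 2 / D * (R ^ (2 * (k + 1)) * x (k + 1)) := by
    intro k
    have hRpow : (R : ℝ) ^ (2 * (k + 1)) = Real.exp (2 * ((k:ℝ) + 1) * L) := by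
      rw [hLdef, mul_comm (2 * ((k:ℝ)+1)) (Real.log R), Real.exp_mul, Real.exp_log hR0]
      rw [← Real.rpow_natCast R (2 * (k + 1))]
      push_cast
      ring_nf
    have hkey := key_pointwise L K ((k:ℝ) + 1) D hKL1 hK1 (by have : (0:ℝ) ≤ (k:ℝ) := Nat.cast_nonneg k; linarith) hD
    rw [hRpow]
    calc ((k:ℝ) + 1) ^ 2 * x (k + 1)
        ≤ (K ^ 2 + K ^ 2 / D * Real.exp (2 * ((k:ℝ) + 1) * L)) * x (k + 1) :=
          mul_le_mul_of_nonneg_right hkey (hx _)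
      _ = K ^ 2 * x (k + 1) + K ^ 2 / D * (Real.exp (2 * ((k:ℝ)+1) * L) * x (k + 1)) := by ring
  -- summability
  have hsumx : Summable (fun k : ℕ => x (k + 1)) := by
    refine hsumR.of_nonneg_of_le (fun k => hx _) (fun k => ?_)
    have h1 : (1:ℝ) ≤ R ^ (2 * (k + 1)) := one_le_pow₀ hR.le
    nlinarith [hx (k + 1)]
  have hmaj : Summable (fun k : ℕ => K ^ 2 * x (k + 1) + K ^ 2 / D * (R ^ (2 * (k + 1)) * x (k + 1))) :=
    (hsumx.mul_left _).add (hsumR.mul_left _)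
  have hsumT : Summable (fun k : ℕ => ((k:ℝ) + 1) ^ 2 * x (k + 1)) :=
    hmaj.of_nonneg_of_le (fun k => mul_nonneg (by positivity) (hx _)) hpt
  have hbound : (∑' k : ℕ, ((k:ℝ) + 1) ^ 2 * x (k + 1)) ≤ 2 * K ^ 2 * ε ^ 2 := by
    have h1 := Summable.tsum_le_tsum hpt hsumT hmaj
    have h2 : (∑' k : ℕ, (K ^ 2 * x (k + 1) + K ^ 2 / D * (R ^ (2 * (k + 1)) * x (k + 1))))
        = K ^ 2 * (∑' k : ℕ, x (k + 1)) + K ^ 2 / D * (∑' k : ℕ, R ^ (2 * (k + 1)) * x (k + 1)) := by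
      rw [Summable.tsum_add (hsumx.mul_left _) (hsumR.mul_left _), tsum_mul_left, tsum_mul_left]
    have h3 : K ^ 2 * (∑' k : ℕ, x (k + 1)) ≤ K ^ 2 * ε ^ 2 :=
      mul_le_mul_of_nonneg_left hs1 (sq_nonneg K)
    have h4 : K ^ 2 / D * (∑' k : ℕ, R ^ (2 * (k + 1)) * x (k + 1)) ≤ K ^ 2 / D * C ^ 2 :=
      mul_le_mul_of_nonneg_left hs2 (by positivity)
    have h5 : K ^ 2 / D * C ^ 2 = K ^ 2 * ε ^ 2 := by
      rw [hDdef]; field_simp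
    rw [h2] at h1
    rw [h5] at h4
    linarith
  have htarget : 2 * ε * Real.log (C / ε) / L = 2 * ε * K := by
    rw [hKdef]; ring
  rw [htarget]
  have hsq : Real.sqrt (∑' k : ℕ, ((k:ℝ) + 1) ^ 2 * x (k + 1)) ≤ Real.sqrt ((2 * ε * K) ^ 2) := by
    apply Real.sqrt_le_sqrt
    nlinarith
  rwa [Real.sqrt_sq (by positivity)] at hsq
end

section
/- Let (λ_k)_{k∈ℕ} be a sequence in (0,∞), let θ and ψ be index functions, and let g, h : ℕ → ℂ be sequences such that ∑ θ(λ_k)|g_k|² < ∞, ∑ θ(λ_k)|h_k|² ≤ ∑ θ(λ_k)|g_k|², ∑ ψ(λ_k)|g_k|² < ∞, and ∑ (θ(λ_k)²/ψ(λ_k))|h_k − g_k|² < ∞. Then, with r = h − g, ∑ θ(λ_k)|r_k|² ≤ 2·√(∑ ψ(λ_k)|g_k|²)·√(∑ (θ(λ_k)²/ψ(λ_k))|r_k|²). -/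
open Set

/-- Cauchy–Schwarz for tsums of nonnegative reals. -/
lemma tsum_cs (a b : ℕ → ℝ) (ha : ∀ k, 0 ≤ a k) (hb : ∀ k, 0 ≤ b k)
    (ha2 : Summable (fun k => a k ^ 2)) (hb2 : Summable (fun k => b k ^ 2))
    (hab : Summable (fun k => a k * b k)) :
    (∑' k, a k * b k) ≤
      Real.sqrt (∑' k, a k ^ 2) * Real.sqrt (∑' k, b k ^ 2) := by
  refine Summable.tsum_le_of_sum_le hab (fun s => ?_)
  calc ∑ k ∈ s, a k * b k
      ≤ Real.sqrt (∑ k ∈ s, a k ^ 2) * Real.sqrt (∑ k ∈ s, b k ^ 2) :=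
        Real.sum_mul_le_sqrt_mul_sqrt s a b
    _ ≤ Real.sqrt (∑' k, a k ^ 2) * Real.sqrt (∑' k, b k ^ 2) := by
        apply mul_le_mul
        · exact Real.sqrt_le_sqrt (Summable.sum_le_tsum s (fun k _ => sq_nonneg _) ha2)
        · exact Real.sqrt_le_sqrt (Summable.sum_le_tsum s (fun k _ => sq_nonneg _) hb2)
        · exact Real.sqrt_nonneg _
        · exact Real.sqrt_nonneg _

/-- **Generalised Morozov estimate** (Section 3.2).  In a variable Hilbert scale
with spectral values `λ_k > 0` and index functions `θ, ψ`, if the sequences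
`g, h : ℕ → ℂ` satisfy `∑ θ(λ_k)|g_k|² < ∞`, `∑ θ(λ_k)|h_k|² ≤ ∑ θ(λ_k)|g_k|²`,
`∑ ψ(λ_k)|g_k|² < ∞` and `∑ (θ(λ_k)²/ψ(λ_k))|h_k - g_k|² < ∞`, then with
`r = h - g`:  `∑ θ(λ_k)|r_k|² ≤ 2 √(∑ ψ(λ_k)|g_k|²) √(∑ (θ(λ_k)²/ψ(λ_k))|r_k|²)`. -/
theorem generalised_morozov_estimate
    (lam : ℕ → ℝ) (hlam : ∀ k, 0 < lam k)
    (θ ψ : ℝ → ℝ) (hθm : Measurable θ) (hψm : Measurable ψ)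
    (hθp : ∀ x ∈ Ioi (0:ℝ), 0 < θ x) (hψp : ∀ x ∈ Ioi (0:ℝ), 0 < ψ x)
    (g h : ℕ → ℂ)
    (hgθ : Summable (fun k => θ (lam k) * ‖g k‖ ^ 2))
    (hhθ : Summable (fun k => θ (lam k) * ‖h k‖ ^ 2))
    (hle : (∑' k, θ (lam k) * ‖h k‖ ^ 2) ≤ ∑' k, θ (lam k) * ‖g k‖ ^ 2)
    (hgψ : Summable (fun k => ψ (lam k) * ‖g k‖ ^ 2))
    (hrθψ : Summable (fun k => θ (lam k) ^ 2 / ψ (lam k) * ‖h k - g k‖ ^ 2)) :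
    (∑' k, θ (lam k) * ‖h k - g k‖ ^ 2) ≤
      2 * Real.sqrt (∑' k, ψ (lam k) * ‖g k‖ ^ 2) *
        Real.sqrt (∑' k, θ (lam k) ^ 2 / ψ (lam k) * ‖h k - g k‖ ^ 2) := by
  set r : ℕ → ℂ := fun k => h k - g k with hr
  have hθ0 : ∀ k, 0 < θ (lam k) := fun k => hθp _ (hlam k)
  have hψ0 : ∀ k, 0 < ψ (lam k) := fun k => hψp _ (hlam k)
  -- the weighted sequences for Cauchy–Schwarz
  set a : ℕ → ℝ := fun k => Real.sqrt (ψ (lam k)) * ‖g k‖ with ha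
  set b : ℕ → ℝ := fun k => θ (lam k) / Real.sqrt (ψ (lam k)) * ‖r k‖ with hb
  have ha0 : ∀ k, 0 ≤ a k := fun k => mul_nonneg (Real.sqrt_nonneg _) (norm_nonneg _)
  have hb0 : ∀ k, 0 ≤ b k := fun k =>
    mul_nonneg (div_nonneg (hθ0 k).le (Real.sqrt_nonneg _)) (norm_nonneg _)
  have hsψ : ∀ k, Real.sqrt (ψ (lam k)) ^ 2 = ψ (lam k) := fun k =>
    Real.sq_sqrt (hψ0 k).le
  have hsψ0 : ∀ k, Real.sqrt (ψ (lam k)) ≠ 0 := fun k =>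
    ne_of_gt (Real.sqrt_pos.2 (hψ0 k))
  have ha2 : (fun k => a k ^ 2) = fun k => ψ (lam k) * ‖g k‖ ^ 2 := by
    funext k; rw [ha, mul_pow, hsψ]
  have hb2 : (fun k => b k ^ 2) = fun k => θ (lam k) ^ 2 / ψ (lam k) * ‖r k‖ ^ 2 := by
    funext k; rw [hb, mul_pow, div_pow, hsψ]
  have hab : ∀ k, a k * b k = θ (lam k) * (‖g k‖ * ‖r k‖) := by
    intro k
    have e : Real.sqrt (ψ (lam k)) * (θ (lam k) / Real.sqrt (ψ (lam k))) = θ (lam k) := by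
      field_simp
      exact mul_div_cancel_left₀ _ (hsψ0 k)
    calc a k * b k = Real.sqrt (ψ (lam k)) * (θ (lam k) / Real.sqrt (ψ (lam k)))
          * (‖g k‖ * ‖r k‖) := by rw [ha, hb]; ring
      _ = θ (lam k) * (‖g k‖ * ‖r k‖) := by rw [e]
  have haS : Summable (fun k => a k ^ 2) := by rw [ha2]; exact hgψ
  have hbS : Summable (fun k => b k ^ 2) := by rw [hb2]; exact hrθψ
  have hab_sum : Summable (fun k => a k * b k) := by
    apply Summable.of_nonneg_of_le (fun k => mul_nonneg (ha0 k) (hb0 k))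
      (fun k => ?_) ((haS.add hbS).div_const 2)
    nlinarith [sq_nonneg (a k - b k)]
  -- the cross term
  set ip : ℕ → ℝ := fun k => ((g k) * (starRingEnd ℂ) (r k)).re with hip
  have hip_le : ∀ k, |θ (lam k) * ip k| ≤ a k * b k := by
    intro k
    rw [hab k, abs_mul, abs_of_pos (hθ0 k)]
    refine mul_le_mul_of_nonneg_left ?_ (hθ0 k).le
    calc |ip k| ≤ ‖(g k) * (starRingEnd ℂ) (r k)‖ := Complex.abs_re_le_norm _
      _ = ‖g k‖ * ‖r k‖ := by
          rw [norm_mul, Complex.norm_conj]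
  have hip_sum : Summable (fun k => θ (lam k) * ip k) := by
    apply Summable.of_abs
    exact Summable.of_nonneg_of_le (fun k => abs_nonneg _) hip_le hab_sum
  -- termwise identity  θ‖h‖² = θ‖g‖² + θ‖r‖² + 2 θ ip
  have key : ∀ k, θ (lam k) * ‖h k‖ ^ 2
      = (θ (lam k) * ‖g k‖ ^ 2 + θ (lam k) * ‖r k‖ ^ 2)
          + 2 * (θ (lam k) * ip k) := by
    intro k
    have hhk : h k = g k + r k := by rw [hr]; ring
    have : ‖h k‖ ^ 2 = ‖g k‖ ^ 2 + ‖r k‖ ^ 2 + 2 * ip k := by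
      rw [hhk]
      simp only [Complex.sq_norm, Complex.normSq_add, hip]
    rw [this]; ring
  have hrθ : Summable (fun k => θ (lam k) * ‖r k‖ ^ 2) := by
    have := (hhθ.sub hgθ).sub (hip_sum.mul_left 2)
    apply this.congr
    intro k
    have hk := key k
    show _ = θ (lam k) * ‖r k‖ ^ 2
    linarith [hk]
  -- sum identity and conclusion
  have hsum : (∑' k, θ (lam k) * ‖h k‖ ^ 2)
      = (∑' k, θ (lam k) * ‖g k‖ ^ 2) + (∑' k, θ (lam k) * ‖r k‖ ^ 2)
        + 2 * (∑' k, θ (lam k) * ip k) := by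
    rw [funext key, Summable.tsum_add (hgθ.add hrθ) (hip_sum.mul_left 2),
      Summable.tsum_add hgθ hrθ, tsum_mul_left]
  have hineq : (∑' k, θ (lam k) * ‖r k‖ ^ 2) ≤ -2 * (∑' k, θ (lam k) * ip k) := by
    linarith [hle, hsum.symm.le, hsum.le]
  have hneg : -2 * (∑' k, θ (lam k) * ip k) ≤ 2 * (∑' k, a k * b k) := by
    have : (∑' k, -(θ (lam k) * ip k)) ≤ ∑' k, a k * b k := by
      apply Summable.tsum_le_tsum _ hip_sum.neg hab_sum
      intro k
      have := hip_le k
      have := neg_abs_le (θ (lam k) * ip k)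
      linarith
    rw [tsum_neg] at this
    linarith
  have hcs := tsum_cs a b ha0 hb0 haS hbS hab_sum
  rw [ha2, hb2] at hcs
  calc (∑' k, θ (lam k) * ‖h k - g k‖ ^ 2)
      = (∑' k, θ (lam k) * ‖r k‖ ^ 2) := rfl
    _ ≤ -2 * (∑' k, θ (lam k) * ip k) := hineq
    _ ≤ 2 * (∑' k, a k * b k) := hneg
    _ ≤ 2 * (Real.sqrt (∑' k, ψ (lam k) * ‖g k‖ ^ 2) *
          Real.sqrt (∑' k, θ (lam k) ^ 2 / ψ (lam k) * ‖r k‖ ^ 2)) := by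
        linarith
    _ = 2 * Real.sqrt (∑' k, ψ (lam k) * ‖g k‖ ^ 2) *
          Real.sqrt (∑' k, θ (lam k) ^ 2 / ψ (lam k) * ‖h k - g k‖ ^ 2) := by
        rw [mul_assoc]
end
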